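/- Let H be a rigid pseudogroup on a finite set X and Λ its set of maximal elements. Then the pseudogroup generated by Λ (all restrictions of elements of Λ and their compositions, inverses, and compatible unions) equals H. -/

import Mathlib

/-- The identity partial permutation of `X`, represented as a graph (a set of pairs). -/
def pid (X : Type*) : Set (X × X) := {xy | xy.1 = xy.2}

/-- The composition `p·q` of two partial permutations (graphs): first apply `q`, then `p`. -/
def pcomp {X : Type*} (p q : Set (X × X)) : Set (X × X) :=
  {xz | ∃ y, (xz.1, y) ∈ q ∧ (y, xz.2) ∈ p}

/-- The domain of a partial permutation represented as a graph. -/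
def pdom {X : Type*} (p : Set (X × X)) : Set X := {x | ∃ y, (x, y) ∈ p}

/-- The range of a partial permutation represented as a graph. -/
def pran {X : Type*} (p : Set (X × X)) : Set X := {y | ∃ x, (x, y) ∈ p}

/-- The inverse of a partial permutation represented as a graph. -/
def pinv {X : Type*} (p : Set (X × X)) : Set (X × X) := {xy | (xy.2, xy.1) ∈ p}

/-- `p` is the graph of a partial permutation: a bijection between two subsets of `X`. -/
def IsPartialPerm {X : Type*} (p : Set (X × X)) : Prop :=
  (∀ x y y', (x, y) ∈ p → (x, y') ∈ p → y = y') ∧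
  (∀ x x' y, (x, y) ∈ p → (x', y) ∈ p → x = x')

/-- A permutoid on `X`: a set of partial permutations (with nonempty domains) of `X`,
containing the identity of `X`, such that any (defined, i.e. nonempty) partial composition
of two members has at most one extension in the set.  Here `q` extends `p` iff `p ⊆ q`
as graphs. -/
structure IsPermutoid {X : Type*} (S : Set (Set (X × X))) : Prop where
  partialPerm : ∀ p ∈ S, IsPartialPerm p
  nonempty : ∀ p ∈ S, p.Nonempty
  id_mem : pid X ∈ S
  unique_ext : ∀ p ∈ S, ∀ q ∈ S, ∀ r ∈ S, ∀ r' ∈ S,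
    (pcomp p q).Nonempty → pcomp p q ⊆ r → pcomp p q ⊆ r' → r = r'

/-- A morphism of permutoids `(φ, Φ) : (S; X) → (S'; X')`. -/
structure IsPermutoidHom {X X' : Type*} (S : Set (Set (X × X))) (S' : Set (Set (X' × X')))
    (φ : Set (X × X) → Set (X' × X')) (Φ : X → X') : Prop where
  maps : ∀ p ∈ S, φ p ∈ S'
  map_id : φ (pid X) = pid X'
  map_rel : ∀ p ∈ S, ∀ x y, (x, y) ∈ p → (Φ x, Φ y) ∈ φ p
  map_comp : ∀ p ∈ S, ∀ q ∈ S, ∀ r ∈ S, (pcomp p q).Nonempty → pcomp p q ⊆ r →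
    pcomp (φ p) (φ q) ⊆ φ r

/-- The permutoid is complete: all its elements are (graphs of) full permutations of `X`. -/
def IsCompletePermutoid {X : Type*} (S : Set (Set (X × X))) : Prop :=
  ∀ p ∈ S, pdom p = Set.univ ∧ pran p = Set.univ

/-- The relators of the universal group of a permutoid: `p q = r` whenever `r ∈ S` extends
the (defined) composition `p·q`. -/
def permutoidRels {X : Type*} (S : Set (Set (X × X))) : Set (FreeGroup ↥S) :=
  {w | ∃ p q r : ↥S, (pcomp p.1 q.1).Nonempty ∧ pcomp p.1 q.1 ⊆ r.1 ∧
    w = FreeGroup.of p * FreeGroup.of q * (FreeGroup.of r)⁻¹}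

/-- The universal group `Γ(S; X)` of a permutoid. -/
abbrev UniversalGroup {X : Type*} (S : Set (Set (X × X))) : Type _ :=
  PresentedGroup (permutoidRels S)

/-- A finite permutoid is developable if it admits a complete finite extension. -/
def Developable {X : Type*} (S : Set (Set (X × X))) : Prop :=
  ∃ (Y : Type) (S' : Set (Set (Y × Y))) (φ : Set (X × X) → Set (Y × Y)) (Φ : X → Y),
    Finite Y ∧ IsPermutoid S' ∧ IsPermutoidHom S S' φ Φ ∧ Function.Injective Φ ∧
    IsCompletePermutoid S'
/-- A pseudogroup of partial bijections of a (finite, discrete) set `X`, with partial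
bijections represented as graphs. -/
structure IsPseudogroup {X : Type*} (H : Set (Set (X × X))) : Prop where
  partialPerm : ∀ h ∈ H, IsPartialPerm h
  id_mem : pid X ∈ H
  inv_mem : ∀ h ∈ H, pinv h ∈ H
  comp_mem : ∀ h ∈ H, ∀ h' ∈ H, pcomp h h' ∈ H
  restr_mem : ∀ h ∈ H, ∀ U : Set X, {xy ∈ h | xy.1 ∈ U} ∈ H
  union_mem : ∀ h ∈ H, ∀ h' ∈ H, IsPartialPerm (h ∪ h') → h ∪ h' ∈ H

/-- A pseudogroup is rigid if whenever two of its elements agree at a point, their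
union also belongs to the pseudogroup. -/
def IsRigidPseudogroup {X : Type*} (H : Set (Set (X × X))) : Prop :=
  IsPseudogroup H ∧ ∀ f ∈ H, ∀ g ∈ H, (f ∩ g).Nonempty → f ∪ g ∈ H

/-- The set of maximal elements of a set of partial permutations. -/
def maxElts {X : Type*} (H : Set (Set (X × X))) : Set (Set (X × X)) :=
  {h ∈ H | ∀ h' ∈ H, h ⊆ h' → h' = h}

/-- The pseudogroup generated by a set of partial permutations: the smallest pseudogroup
containing it (in particular containing all restrictions of its elements). -/
def genPseudogroup {X : Type*} (S : Set (Set (X × X))) : Set (Set (X × X)) :=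
  ⋂₀ {H | IsPseudogroup H ∧ S ⊆ H}

/-- A permutoid is rigid if distinct elements never agree at any point. -/
def IsRigidPermutoid {X : Type*} (S : Set (Set (X × X))) : Prop :=
  IsPermutoid S ∧ ∀ p ∈ S, ∀ q ∈ S, p ≠ q → ∀ a : X × X, a ∈ p → a ∉ q

/-- For a rigid pseudogroup `H` on a finite set `X` with set of maximal elements `Λ`,
the pseudogroup generated by `Λ` equals `H`. -/
theorem genPseudogroup_maxElts {X : Type*} [Finite X]
    {H : Set (Set (X × X))} (hH : IsRigidPseudogroup H) :
    genPseudogroup (maxElts H) = H := by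
  obtain ⟨hP, -⟩ := hH
  apply subset_antisymm
  · exact Set.sInter_subset_of_mem ⟨hP, fun m hm => hm.1⟩
  · intro h hh K hK
    obtain ⟨hKp, hΛ⟩ := hK
    have hfin : ({g ∈ H | h ⊆ g}).Finite := Set.toFinite _
    have hne : ({g ∈ H | h ⊆ g}).Nonempty := ⟨h, hh, subset_rfl⟩
    obtain ⟨m, hm, hmax⟩ := hfin.exists_maximalFor id _ hne
    have hmMax : m ∈ maxElts H := by
      refine ⟨hm.1, fun g' hg' hsub => ?_⟩
      exact subset_antisymm (hmax ⟨hg', hm.2.trans hsub⟩ hsub) hsub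
    have heq : h = {xy ∈ m | xy.1 ∈ pdom h} := by
      ext ⟨x, y⟩
      constructor
      · intro hxy
        exact ⟨hm.2 hxy, ⟨y, hxy⟩⟩
      · rintro ⟨hxym, y', hy'⟩
        have := (hP.partialPerm m hm.1).1 x y y' hxym (hm.2 hy')
        rwa [this]
    rw [heq]
    exact hKp.restr_mem m (hΛ hmMax) _
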